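/- Fix n ≥ 1 and let A be an n×n random matrix whose n² entries are i.i.d. standard normal random variables. Then P(s(A) is even) = 1/2, and consequently P(s(A) is odd) = 1/2. -/

import Mathlib

open Polynomial MeasureTheory ProbabilityTheory

/-- The stability index of a real `n × n` matrix: the number of complex roots, counted
with multiplicity, of its characteristic polynomial that have negative real part. -/
noncomputable def stabilityIndex {n : ℕ} (A : Matrix (Fin n) (Fin n) ℝ) : ℕ :=
  Multiset.card
    (((A.charpoly).map (algebraMap ℝ ℂ)).roots.filter fun z => z.re < 0)

section Aux

lemma prodSign (T : Multiset ℝ) (hT : (0:ℝ) ∉ T) :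
    0 < T.prod ↔ Even (Multiset.card (T.filter (· < 0))) := by
  induction T using Multiset.induction with
  | empty => simp
  | cons a T ih =>
    have ha : a ≠ 0 := fun h => hT (by simp [h])
    have hT' : (0:ℝ) ∉ T := fun h => hT (Multiset.mem_cons_of_mem h)
    have hP : T.prod ≠ 0 := Multiset.prod_ne_zero hT'
    rw [Multiset.prod_cons]
    rcases lt_or_gt_of_ne ha with h | h
    · rw [Multiset.filter_cons_of_pos (p := fun x => x < 0) T h, Multiset.card_cons, Nat.even_add_one, ← ih hT']
      constructor
      · intro hp hq; nlinarith
      · intro hq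
        rcases hP.lt_or_gt with h2 | h2
        · nlinarith
        · exact absurd h2 hq
    · rw [Multiset.filter_cons_of_neg (p := fun x => x < 0) T (not_lt.2 h.le), ← ih hT']
      constructor
      · intro hp; nlinarith
      · intro hp; nlinarith


lemma evenIffDetPos {n : ℕ} {A : Matrix (Fin n) (Fin n) ℝ} (hA : A.det ≠ 0) :
    Even (stabilityIndex A) ↔ 0 < A.det := by
  classical
  set p : Polynomial ℂ := (A.charpoly).map (algebraMap ℝ ℂ) with hp
  set R : Multiset ℂ := p.roots with hRdef
  -- p = charpoly of mapped matrix
  have hchar : (A.map (algebraMap ℝ ℂ)).charpoly = p := Matrix.charpoly_map A _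
  -- det as product of roots
  have hdet : (A.det : ℂ) = R.prod := by
    have h1 := Matrix.det_eq_prod_roots_charpoly (A.map (algebraMap ℝ ℂ))
    rw [hchar] at h1
    rw [← h1, show ((A.det : ℂ)) = (algebraMap ℝ ℂ) A.det from rfl, RingHom.map_det,
      RingHom.mapMatrix_apply]
  -- conjugation invariance
  have hconj : R.map (starRingEnd ℂ) = R := by
    have hsplits : p.Splits := IsAlgClosed.splits p
    have := (hsplits.roots_map (starRingEnd ℂ)).symm
    rw [this, hp, Polynomial.map_map]
    have heq : (starRingEnd ℂ).comp (algebraMap ℝ ℂ) = algebraMap ℝ ℂ :=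
      RingHom.ext fun r => by simp
    rw [heq]
  -- zero is not a root
  have h0R : (0 : ℂ) ∉ R := by
    intro h0
    have hroot := Polynomial.isRoot_of_mem_roots h0
    have : p.eval 0 = 0 := hroot
    rw [hp, Polynomial.eval_map, Polynomial.eval₂_at_zero] at this
    have hc0 : A.charpoly.coeff 0 = 0 := by
      simpa using this
    have := Matrix.det_eq_sign_charpoly_coeff A
    rw [hc0, mul_zero] at this
    exact hA this
  -- conjugate-pair card equality
  have hcc : Multiset.card (R.filter fun z => z.re < 0 ∧ 0 < z.im)
      = Multiset.card (R.filter fun z => z.re < 0 ∧ z.im < 0) := by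
    conv_rhs => rw [← hconj]
    rw [Multiset.filter_map, Multiset.card_map]
    congr 1
    refine Multiset.filter_congr fun z hz => ?_
    simp only [Function.comp, Complex.conj_re, Complex.conj_im]
    constructor
    · rintro ⟨h1, h2⟩; exact ⟨h1, by linarith⟩
    · rintro ⟨h1, h2⟩; exact ⟨h1, by linarith⟩
  -- pairing of nonreal roots for the product
  have hprodpair : R.filter (fun z => z.im < 0)
      = (R.filter fun z => 0 < z.im).map (starRingEnd ℂ) := by
    conv_lhs => rw [← hconj]
    rw [Multiset.filter_map]
    congr 1
    refine Multiset.filter_congr fun z hz => ?_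
    simp only [Function.comp, Complex.conj_im]
    constructor
    · intro h1; linarith
    · intro h1; linarith
  set S0 := R.filter (fun z => z.im = 0) with hS0def
  have hsp : R = S0 + R.filter (fun z => ¬ z.im = 0) := (Multiset.filter_add_not _ R).symm
  have hsplit2 : R.filter (fun z => ¬ z.im = 0)
      = R.filter (fun z => 0 < z.im) + R.filter (fun z => z.im < 0) := by
    have h := (Multiset.filter_add_not (fun z : ℂ => 0 < z.im)
      (R.filter (fun z => ¬ z.im = 0))).symm
    rw [Multiset.filter_filter, Multiset.filter_filter] at h
    rw [h]
    congr 1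
    · refine Multiset.filter_congr fun z hz => ?_
      constructor
      · rintro ⟨h1, _⟩; exact h1
      · intro h1; exact ⟨h1, ne_of_gt h1⟩
    · refine Multiset.filter_congr fun z hz => ?_
      constructor
      · rintro ⟨h1, h2⟩; exact lt_of_le_of_ne (not_lt.1 h1) h2
      · intro h1; exact ⟨not_lt.2 h1.le, ne_of_lt h1⟩
  set u := (R.filter fun z => 0 < z.im).prod with hu
  have hu0 : u ≠ 0 := by
    refine Multiset.prod_ne_zero ?_
    intro h
    have := Multiset.of_mem_filter h
    simp at this
  have hprodneg : (R.filter fun z => z.im < 0).prod = (starRingEnd ℂ) u := by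
    rw [hprodpair, hu]
    exact (map_multiset_prod (starRingEnd ℂ) _).symm
  set T : Multiset ℝ := S0.map Complex.re with hTdef
  have hT0 : (0:ℝ) ∉ T := by
    intro h
    obtain ⟨z, hz, hre⟩ := Multiset.mem_map.1 h
    rw [hS0def] at hz
    have hzim : z.im = 0 := (Multiset.mem_filter.1 hz).2
    have hzR : z ∈ R := (Multiset.mem_filter.1 hz).1
    have hz0 : z = 0 := Complex.ext (by simpa using hre) (by simpa using hzim)
    exact h0R (hz0 ▸ hzR)
  have hS0prod : S0.prod = ((T.prod : ℝ) : ℂ) := by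
    have hmapid : S0.map (fun z => ((z.re : ℝ) : ℂ)) = S0 := by
      have h := Multiset.map_congr (rfl : S0 = S0)
        (fun z hz => show ((z.re:ℝ):ℂ) = id z from by
          rw [hS0def] at hz
          have him : z.im = 0 := (Multiset.mem_filter.1 hz).2
          exact Complex.ext (by simp) (by simp [him]))
      rw [h, Multiset.map_id]
    calc S0.prod = (S0.map (fun z => ((z.re : ℝ) : ℂ))).prod := by rw [hmapid]
    _ = ((S0.map Complex.re).map (fun x : ℝ => (x : ℂ))).prod := by rw [Multiset.map_map]; rfl
    _ = ((T.prod : ℝ) : ℂ) := by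
        rw [hTdef]
        exact (map_multiset_prod Complex.ofRealHom _).symm
  have hprodR : (A.det : ℂ) = ((T.prod * Complex.normSq u : ℝ) : ℂ) := by
    rw [hdet]
    conv_lhs => rw [hsp]
    rw [Multiset.prod_add, hsplit2, Multiset.prod_add, hprodneg, hS0prod, ← hu,
      Complex.mul_conj]
    push_cast
    ring
  have hdetR : A.det = T.prod * Complex.normSq u := by exact_mod_cast hprodR
  have hnormSq : 0 < Complex.normSq u := Complex.normSq_pos.2 hu0
  -- split the stability index
  have hsi : stabilityIndex A = Multiset.card (R.filter fun z => z.re < 0 ∧ z.im = 0)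
      + (Multiset.card (R.filter fun z => z.re < 0 ∧ 0 < z.im)
         + Multiset.card (R.filter fun z => z.re < 0 ∧ z.im < 0)) := by
    have h1 : R.filter (fun z => z.re < 0)
        = R.filter (fun z => z.re < 0 ∧ z.im = 0)
          + R.filter (fun z => z.re < 0 ∧ ¬ z.im = 0) := by
      have h := (Multiset.filter_add_not (fun z : ℂ => z.im = 0)
        (R.filter (fun z => z.re < 0))).symm
      rw [Multiset.filter_filter, Multiset.filter_filter] at h
      rw [h]
      congr 1
      · exact Multiset.filter_congr fun z hz => and_comm
      · exact Multiset.filter_congr fun z hz => and_comm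
    have h2 : R.filter (fun z => z.re < 0 ∧ ¬ z.im = 0)
        = R.filter (fun z => z.re < 0 ∧ 0 < z.im)
          + R.filter (fun z => z.re < 0 ∧ z.im < 0) := by
      have h := (Multiset.filter_add_not (fun z : ℂ => 0 < z.im)
        (R.filter (fun z => z.re < 0 ∧ ¬ z.im = 0))).symm
      rw [Multiset.filter_filter, Multiset.filter_filter] at h
      rw [h]
      congr 1
      · refine Multiset.filter_congr fun z hz => ?_
        constructor
        · rintro ⟨h1, h2, _⟩; exact ⟨h2, h1⟩
        · rintro ⟨h1, h2⟩; exact ⟨h2, h1, ne_of_gt h2⟩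
      · refine Multiset.filter_congr fun z hz => ?_
        constructor
        · rintro ⟨h1, h2, h3⟩; exact ⟨h2, lt_of_le_of_ne (not_lt.1 h1) h3⟩
        · rintro ⟨h1, h2⟩; exact ⟨not_lt.2 h2.le, h1, ne_of_lt h2⟩
    rw [stabilityIndex, ← hp, ← hRdef, h1, Multiset.card_add, h2, Multiset.card_add]
  have hcards : Multiset.card (T.filter (· < 0))
      = Multiset.card (R.filter fun z => z.re < 0 ∧ z.im = 0) := by
    rw [hTdef, Multiset.filter_map, Multiset.card_map, hS0def, Multiset.filter_filter]
    rfl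
  have heven2 : Even (Multiset.card (R.filter fun z => z.re < 0 ∧ 0 < z.im)
      + Multiset.card (R.filter fun z => z.re < 0 ∧ z.im < 0)) := by
    rw [← hcc]; exact ⟨_, rfl⟩
  rw [hsi, Nat.even_add, iff_true_intro heven2, iff_true, ← hcards,
    ← prodSign T hT0, hdetR]
  constructor
  · intro h; nlinarith
  · intro h; nlinarith

lemma gaussian_finite_null {s : Set ℝ} (hs : s.Finite) : gaussianReal 0 1 s = 0 :=
  gaussianReal_absolutelyContinuous 0 (one_ne_zero) (hs.measure_zero _)

lemma mvpoly_null : ∀ (m : ℕ) (p : MvPolynomial (Fin m) ℝ), p ≠ 0 →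
    (Measure.pi fun _ : Fin m => gaussianReal 0 1) {a | MvPolynomial.eval a p = 0} = 0 := by
  intro m
  induction m with
  | zero =>
    intro p hp
    obtain ⟨c, rfl⟩ := MvPolynomial.C_surjective (Fin 0) p
    have hc : c ≠ 0 := fun h => hp (by rw [h, map_zero])
    convert measure_empty
    · ext a; simp [hc]
    · infer_instance
  | succ m ih =>
    intro p hp
    set q : Polynomial (MvPolynomial (Fin m) ℝ) := MvPolynomial.finSuccEquiv ℝ m p with hq
    have hq0 : q ≠ 0 := by
      intro h
      apply hp
      have := congrArg (MvPolynomial.finSuccEquiv ℝ m).symm (h : q = 0)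
      simpa [hq] using this
    have hlc : q.leadingCoeff ≠ 0 := Polynomial.leadingCoeff_ne_zero.2 hq0
    set μ : Measure ℝ := gaussianReal 0 1
    have h1 := measurePreserving_piFinSuccAbove (fun _ : Fin (m+1) => μ) 0
    set e := MeasurableEquiv.piFinSuccAbove (fun _ : Fin (m+1) => ℝ) 0 with he
    set T : Set (ℝ × (Fin m → ℝ)) :=
      {ys | Polynomial.eval ys.1 (Polynomial.map (MvPolynomial.eval ys.2) q) = 0} with hT
    have hTmeas : MeasurableSet T := by
      have hcont : Continuous fun ys : ℝ × (Fin m → ℝ) =>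
          Polynomial.eval ys.1 (Polynomial.map (MvPolynomial.eval ys.2) q) := by
        have : ∀ ys : ℝ × (Fin m → ℝ),
            Polynomial.eval ys.1 (Polynomial.map (MvPolynomial.eval ys.2) q)
            = MvPolynomial.eval (Fin.cons ys.1 ys.2) p := by
          intro ys
          rw [hq, ← MvPolynomial.eval_eq_eval_mv_eval']
        rw [funext this]
        refine (MvPolynomial.continuous_eval p).comp (continuous_pi fun i => ?_)
        refine Fin.cases ?_ (fun j => ?_) i
        · simp only [Fin.cons_zero]; exact continuous_fst
        · simp only [Fin.cons_succ]
          exact (continuous_apply j).comp continuous_snd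
      exact (hcont.measurable (MeasurableSet.singleton 0) : _)
    have hsymm : ∀ (y : ℝ) (s : Fin m → ℝ), e.symm (y, s) = Fin.cons y s := by
      intro y s
      show (Fin.insertNthEquiv (fun _ => ℝ) 0) (y, s) = Fin.cons y s
      rw [Fin.insertNthEquiv_zero]
      rfl
    have hpre : {a : Fin (m+1) → ℝ | MvPolynomial.eval a p = 0} = e ⁻¹' T := by
      ext a
      rcases hEA : e a with ⟨y, s⟩
      have ha : a = Fin.cons y s := by
        rw [← hsymm, ← hEA]
        exact (e.symm_apply_apply a).symm
      simp only [Set.mem_preimage, hEA, hT, Set.mem_setOf_eq]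
      rw [ha, MvPolynomial.eval_eq_eval_mv_eval', hq]
    rw [hpre, h1.measure_preimage hTmeas.nullMeasurableSet]
    rw [Measure.prod_apply_symm hTmeas]
    have hae : ∀ᵐ s ∂(Measure.pi fun _ : Fin m => μ),
        μ ((fun x => (x, s)) ⁻¹' T) = 0 := by
      have h2 := ih q.leadingCoeff hlc
      have h2' : ∀ᵐ s ∂(Measure.pi fun _ : Fin m => μ),
          MvPolynomial.eval s q.leadingCoeff ≠ 0 := by
        rw [ae_iff]
        simp only [ne_eq, not_not]
        exact h2
      filter_upwards [h2'] with s hs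
      have hmapne : Polynomial.map (MvPolynomial.eval s) q ≠ 0 := by
        intro h
        apply hs
        have h3 : (Polynomial.map (MvPolynomial.eval s) q).coeff q.natDegree = 0 := by
          rw [h]; simp
        rw [Polynomial.coeff_map] at h3
        exact h3
      have hfin : {x : ℝ | Polynomial.IsRoot (Polynomial.map (MvPolynomial.eval s) q) x}.Finite :=
        Polynomial.finite_setOf_isRoot hmapne
      apply gaussian_finite_null
      apply hfin.subset
      intro x hx
      simpa [hT] using hx
    rw [lintegral_congr_ae hae]
    simp


lemma det_continuous (n : ℕ) :
    Continuous fun a : Fin n × Fin n → ℝ => (Matrix.of fun i j => a (i, j)).det := by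
  exact (continuous_matrix fun i j => continuous_apply (i, j)).matrix_det

lemma det_null (n : ℕ) :
    (Measure.pi fun _ : Fin n × Fin n => gaussianReal 0 1)
      {a | (Matrix.of fun i j => a (i, j)).det = 0} = 0 := by
  classical
  set E : (Fin (n*n) → ℝ) ≃ᵐ ((Fin n × Fin n) → ℝ) :=
    MeasurableEquiv.arrowCongr' (finProdFinEquiv.symm : Fin (n*n) ≃ (Fin n × Fin n))
      (MeasurableEquiv.refl ℝ) with hE
  have hEmp : MeasurePreserving E (Measure.pi fun _ : Fin (n*n) => gaussianReal 0 1)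
      (Measure.pi fun _ : Fin n × Fin n => gaussianReal 0 1) := by
    refine measurePreserving_arrowCongr' _ _ _ _ fun i => ?_
    refine ⟨(MeasurableEquiv.refl ℝ).measurable, ?_⟩
    have : ⇑(MeasurableEquiv.refl ℝ) = id := rfl
    rw [this, Measure.map_id]
  have hS : MeasurableSet {a : Fin n × Fin n → ℝ | (Matrix.of fun i j => a (i, j)).det = 0} :=
    (det_continuous n).measurable (MeasurableSet.singleton 0)
  rw [← hEmp.measure_preimage hS.nullMeasurableSet]
  set P : MvPolynomial (Fin n × Fin n) ℝ := (Matrix.mvPolynomialX (Fin n) (Fin n) ℝ).det with hP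
  set Q : MvPolynomial (Fin (n*n)) ℝ := MvPolynomial.rename finProdFinEquiv P with hQ
  have hQ0 : Q ≠ 0 := by
    intro h
    apply Matrix.det_mvPolynomialX_ne_zero (m := Fin n) (R := ℝ)
    apply MvPolynomial.rename_injective _ finProdFinEquiv.injective
    rw [← hP, ← hQ, h, map_zero]
  have hkey : ∀ g : Fin n × Fin n → ℝ,
      MvPolynomial.eval g P = (Matrix.of fun i j => g (i, j)).det := by
    intro g
    rw [hP, RingHom.map_det]
    congr 1
    exact Matrix.mvPolynomialX_mapMatrix_eval (Matrix.of fun i j => g (i, j))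
  have hpre : E ⁻¹' {a : Fin n × Fin n → ℝ | (Matrix.of fun i j => a (i, j)).det = 0}
      = {b | MvPolynomial.eval b Q = 0} := by
    ext b
    simp only [Set.mem_preimage, Set.mem_setOf_eq, hQ, MvPolynomial.eval_rename]
    rw [hkey (b ∘ finProdFinEquiv)]
    rfl
  rw [hpre]
  exact mvpoly_null (n*n) Q hQ0





lemma gauss_neg : MeasurePreserving (fun x : ℝ => -x) (gaussianReal 0 1) (gaussianReal 0 1) := by
  refine ⟨measurable_neg, ?_⟩
  have h1 : (fun x : ℝ => -x) = ((-1 : ℝ) * ·) := by funext x; ring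
  rw [h1, gaussianReal_map_const_mul]
  norm_num

lemma det_sym (n : ℕ) (hn : 1 ≤ n) :
    (Measure.pi fun _ : Fin n × Fin n => gaussianReal 0 1)
        {a | 0 < (Matrix.of fun i j => a (i, j)).det}
      = (Measure.pi fun _ : Fin n × Fin n => gaussianReal 0 1)
        {a | (Matrix.of fun i j => a (i, j)).det < 0} := by
  classical
  set i0 : Fin n := ⟨0, hn⟩ with hi0
  set f : Fin n × Fin n → ℝ → ℝ := fun p => if p.1 = i0 then (fun x => -x) else id with hf
  have hφ : MeasurePreserving (fun a (p : Fin n × Fin n) => f p (a p))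
      (Measure.pi fun _ : Fin n × Fin n => gaussianReal 0 1)
      (Measure.pi fun _ : Fin n × Fin n => gaussianReal 0 1) := by
    refine measurePreserving_pi _ _ fun p => ?_
    simp only [hf]
    split_ifs
    · exact gauss_neg
    · exact MeasurePreserving.id _
  have hdetφ : ∀ a : Fin n × Fin n → ℝ,
      (Matrix.of fun i j => (fun (p : Fin n × Fin n) => f p (a p)) (i, j)).det
        = - (Matrix.of fun i j => a (i, j)).det := by
    intro a
    set A : Matrix (Fin n) (Fin n) ℝ := Matrix.of fun i j => a (i, j) with hA
    have hupd : (Matrix.of fun i j => (fun (p : Fin n × Fin n) => f p (a p)) (i, j))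
        = Matrix.updateRow A i0 ((-1 : ℝ) • A i0) := by
      ext i j
      rw [Matrix.updateRow_apply]
      by_cases h : i = i0 <;> simp [hf, hA, h]
    rw [hupd, Matrix.det_updateRow_smul, Matrix.updateRow_eq_self]
    ring
  have hneg_meas : MeasurableSet {a : Fin n × Fin n → ℝ | (Matrix.of fun i j => a (i, j)).det < 0} :=
    (det_continuous n).measurable measurableSet_Iio
  rw [← hφ.measure_preimage hneg_meas.nullMeasurableSet]
  congr 1
  ext a
  simp only [Set.mem_preimage, Set.mem_setOf_eq]
  rw [hdetφ a]
  constructor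
  · intro h; linarith
  · intro h; linarith

end Aux

/-- For an `n × n` random matrix with i.i.d. standard normal entries,
`P(s(A)` is even`) = 1/2` and `P(s(A)` is odd`) = 1/2`. -/
theorem stmt_3 (n : ℕ) (hn : 1 ≤ n) :
    (Measure.pi fun _ : Fin n × Fin n => gaussianReal 0 1)
        {a | Even (stabilityIndex (Matrix.of fun i j => a (i, j)))} = 1 / 2
    ∧ (Measure.pi fun _ : Fin n × Fin n => gaussianReal 0 1)
        {a | Odd (stabilityIndex (Matrix.of fun i j => a (i, j)))} = 1 / 2 := by

  classical
  set μ := Measure.pi fun _ : Fin n × Fin n => gaussianReal 0 1 with hμ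
  set D : (Fin n × Fin n → ℝ) → ℝ := fun a => (Matrix.of fun i j => a (i, j)).det with hD
  have hDc : Continuous D := det_continuous n
  have hpos_meas : MeasurableSet {a | 0 < D a} := hDc.measurable measurableSet_Ioi
  have hneg_meas : MeasurableSet {a | D a < 0} := hDc.measurable measurableSet_Iio
  have hzero_meas : MeasurableSet {a | D a = 0} :=
    hDc.measurable (MeasurableSet.singleton 0)
  have hnull : μ {a | D a = 0} = 0 := det_null n
  have hsym : μ {a | 0 < D a} = μ {a | D a < 0} := det_sym n hn
  have hsplit : μ {a | 0 < D a} + μ {a | D a < 0} = 1 := by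
    have hdisj : Disjoint {a | 0 < D a} {a | D a < 0} := by
      rw [Set.disjoint_left]
      intro a h1 h2
      simp only [Set.mem_setOf_eq] at h1 h2
      linarith
    rw [← measure_union hdisj hneg_meas]
    have hcompl : {a | 0 < D a} ∪ {a | D a < 0} = {a | D a = 0}ᶜ := by
      ext a
      simp only [Set.mem_union, Set.mem_setOf_eq, Set.mem_compl_iff]
      constructor
      · rintro (h | h) h0 <;> rw [h0] at h <;> exact lt_irrefl 0 h
      · intro h
        rcases lt_trichotomy (D a) 0 with h1 | h1 | h1
        · exact Or.inr h1
        · exact absurd h1 h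
        · exact Or.inl h1
    rw [hcompl, measure_compl hzero_meas (measure_ne_top μ _), hnull, measure_univ, tsub_zero]
  have hhalfpos : μ {a | 0 < D a} = 1 / 2 := by
    have h2 : 2 * μ {a | 0 < D a} = 1 := by
      rw [two_mul]
      nth_rewrite 2 [hsym]
      exact hsplit
    rw [ENNReal.eq_div_iff two_ne_zero ENNReal.ofNat_ne_top]
    exact h2
  have hhalfneg : μ {a | D a < 0} = 1 / 2 := by rw [← hsym]; exact hhalfpos
  constructor
  · have hae : {a | Even (stabilityIndex (Matrix.of fun i j => a (i, j)))} =ᵐ[μ] {a | 0 < D a} := by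
      rw [MeasureTheory.ae_eq_set]
      constructor
      · refine measure_mono_null ?_ hnull
        rintro a ⟨he, hnp⟩
        simp only [Set.mem_setOf_eq] at *
        by_contra h0
        exact hnp ((evenIffDetPos h0).1 he)
      · refine measure_mono_null ?_ hnull
        rintro a ⟨hp, hne⟩
        simp only [Set.mem_setOf_eq] at *
        exact absurd ((evenIffDetPos (ne_of_gt hp)).2 hp) hne
    rw [measure_congr hae]
    exact hhalfpos
  · have hae : {a | Odd (stabilityIndex (Matrix.of fun i j => a (i, j)))} =ᵐ[μ] {a | D a < 0} := by
      rw [MeasureTheory.ae_eq_set]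
      constructor
      · refine measure_mono_null ?_ hnull
        rintro a ⟨ho, hnn⟩
        simp only [Set.mem_setOf_eq] at *
        by_contra h0
        have heven : Even (stabilityIndex (Matrix.of fun i j => a (i, j))) := by
          rw [evenIffDetPos h0]
          rcases lt_trichotomy (D a) 0 with h1 | h1 | h1
          · exact absurd h1 hnn
          · exact absurd h1 h0
          · exact h1
        exact (Nat.not_even_iff_odd.2 ho) heven
      · refine measure_mono_null ?_ hnull
        rintro a ⟨hp, hno⟩
        simp only [Set.mem_setOf_eq] at *
        have hne : D a ≠ 0 := ne_of_lt hp
        have : ¬ Even (stabilityIndex (Matrix.of fun i j => a (i, j))) := by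
          rw [evenIffDetPos hne]
          intro h; linarith
        exact absurd (Nat.not_even_iff_odd.1 this) hno
    rw [measure_congr hae]
    exact hhalfneg
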